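/- arXiv:2411.03677 — 2 statements merged into one kernel-verified Lean document; each statement's English description precedes it below -/
import Mathlib

section
/- For fixed d, V, C > 0, the finite-blocklength error probability ε(n) = Q(w(n)) is convex in n on any interval of n > 0 where w(n) ≥ 0, since ε''(n) = Q''(w)·(w')² + Q'(w)·w'' with Q''(w) ≥ 0 for w ≥ 0, w'' ≤ 0, and Q'(w) < 0. -/
noncomputable def Qfun (x : ℝ) : ℝ :=
  (1 / Real.sqrt (2 * Real.pi)) * ∫ t in Set.Ioi x, Real.exp (-t ^ 2 / 2)

noncomputable def wfun (d V C n : ℝ) : ℝ := Real.sqrt (n / V) * (C - d / n) * Real.log 2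

open MeasureTheory Set Real

lemma gauss_integrable : Integrable (fun t : ℝ => Real.exp (-t ^ 2 / 2)) := by
  have h := integrable_exp_neg_mul_sq (by norm_num : (0:ℝ) < 1/2)
  refine h.congr ?_
  filter_upwards with t
  ring_nf

lemma Qfun_eq (x : ℝ) :
    Qfun x = (1 / Real.sqrt (2 * Real.pi)) *
      ((∫ t : ℝ, Real.exp (-t ^ 2 / 2)) - (∫ t in Iic (0:ℝ), Real.exp (-t ^ 2 / 2))
        - ∫ t in (0:ℝ)..x, Real.exp (-t ^ 2 / 2)) := by
  have hint := gauss_integrable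
  have h1 : (∫ t in Iic x, Real.exp (-t ^ 2 / 2)) + (∫ t in Ioi x, Real.exp (-t ^ 2 / 2))
      = ∫ t : ℝ, Real.exp (-t ^ 2 / 2) :=
    intervalIntegral.integral_Iic_add_Ioi hint.integrableOn hint.integrableOn
  have h2 : (∫ t in Iic x, Real.exp (-t ^ 2 / 2)) - (∫ t in Iic (0:ℝ), Real.exp (-t ^ 2 / 2))
      = ∫ t in (0:ℝ)..x, Real.exp (-t ^ 2 / 2) :=
    intervalIntegral.integral_Iic_sub_Iic hint.integrableOn hint.integrableOn
  unfold Qfun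
  rw [← h1, ← h2]
  ring

lemma Qfun_hasDerivAt (x : ℝ) :
    HasDerivAt Qfun (-((1 / Real.sqrt (2 * Real.pi)) * Real.exp (-x ^ 2 / 2))) x := by
  have hcont : Continuous fun t : ℝ => Real.exp (-t ^ 2 / 2) := by
    continuity
  have hF : HasDerivAt (fun x : ℝ => ∫ t in (0:ℝ)..x, Real.exp (-t ^ 2 / 2))
      (Real.exp (-x ^ 2 / 2)) x :=
    intervalIntegral.integral_hasDerivAt_right (gauss_integrable.intervalIntegrable)
      (hcont.stronglyMeasurableAtFilter _ _) hcont.continuousAt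
  have : HasDerivAt (fun x : ℝ => (1 / Real.sqrt (2 * Real.pi)) *
      ((∫ t : ℝ, Real.exp (-t ^ 2 / 2)) - (∫ t in Iic (0:ℝ), Real.exp (-t ^ 2 / 2))
        - ∫ t in (0:ℝ)..x, Real.exp (-t ^ 2 / 2)))
      (-((1 / Real.sqrt (2 * Real.pi)) * Real.exp (-x ^ 2 / 2))) x := by
    have := (hF.const_sub ((∫ t : ℝ, Real.exp (-t ^ 2 / 2))
      - (∫ t in Iic (0:ℝ), Real.exp (-t ^ 2 / 2)))).const_mul (1 / Real.sqrt (2 * Real.pi))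
    rw [← mul_neg]
    exact this
  exact this.congr_of_eventuallyEq (Filter.Eventually.of_forall fun y => Qfun_eq y)

lemma Qfun_deriv : deriv Qfun = fun x => -((1 / Real.sqrt (2 * Real.pi)) * Real.exp (-x ^ 2 / 2)) := by
  funext x
  exact (Qfun_hasDerivAt x).deriv

lemma Qfun_antitone : Antitone Qfun := by
  intro x y hxy
  unfold Qfun
  have hc : (0:ℝ) ≤ 1 / Real.sqrt (2 * Real.pi) := by positivity
  refine mul_le_mul_of_nonneg_left ?_ hc
  refine setIntegral_mono_set gauss_integrable.integrableOn ?_ ?_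
  · filter_upwards with t using (Real.exp_pos _).le
  · exact HasSubset.Subset.eventuallyLE (Ioi_subset_Ioi hxy)

lemma Qfun_convexOn : ConvexOn ℝ (Ici (0:ℝ)) Qfun := by
  have hdiff : Differentiable ℝ Qfun := fun x => (Qfun_hasDerivAt x).differentiableAt
  refine MonotoneOn.convexOn_of_deriv (convex_Ici 0) hdiff.continuous.continuousOn
    hdiff.differentiableOn ?_
  rw [Qfun_deriv, interior_Ici]
  intro x hx y hy hxy
  simp only [neg_le_neg_iff]
  have hc : (0:ℝ) ≤ 1 / Real.sqrt (2 * Real.pi) := by positivity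
  refine mul_le_mul_of_nonneg_left (Real.exp_le_exp.2 ?_) hc
  have hx0 : (0:ℝ) < x := hx
  nlinarith [mul_self_nonneg (y - x)]

lemma wfun_concaveOn (d V C : ℝ) (hd : 0 < d) (hV : 0 < V) (hC : 0 < C) :
    ConcaveOn ℝ (Ioi (0:ℝ)) (wfun d V C) := by
  set k1 : ℝ := C * Real.log 2 / Real.sqrt V with hk1
  set k2 : ℝ := d * Real.log 2 / Real.sqrt V with hk2
  have hk1pos : 0 ≤ k1 := by
    have := Real.log_pos (by norm_num : (1:ℝ) < 2)
    positivity
  have hk2pos : 0 ≤ k2 := by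
    have := Real.log_pos (by norm_num : (1:ℝ) < 2)
    positivity
  set g : ℝ → ℝ := fun n => k1 * n ^ ((1:ℝ)/2) - k2 * n ^ (-(1:ℝ)/2) with hg
  have heq : ∀ n ∈ Ioi (0:ℝ), wfun d V C n = g n := by
    intro n hn
    have hn0 : (0:ℝ) < n := hn
    have hsV : (0:ℝ) < Real.sqrt V := Real.sqrt_pos.2 hV
    have hsn : (0:ℝ) < Real.sqrt n := Real.sqrt_pos.2 hn0
    have h1 : Real.sqrt (n / V) = Real.sqrt n / Real.sqrt V := Real.sqrt_div hn0.le V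
    have h2 : n ^ ((1:ℝ)/2) = Real.sqrt n := (Real.sqrt_eq_rpow n).symm
    have h3 : n ^ (-(1:ℝ)/2) = (Real.sqrt n)⁻¹ := by
      rw [neg_div, Real.rpow_neg hn0.le, h2]
    have hsq : Real.sqrt n * Real.sqrt n = n := Real.mul_self_sqrt hn0.le
    simp only [hg, wfun, h1, h2, h3, hk1, hk2]
    field_simp
    linear_combination (- d) * hsq
  set g' : ℝ → ℝ := fun n => k1 * (((1:ℝ)/2) * n ^ ((1:ℝ)/2 - 1))
      - k2 * ((-(1:ℝ)/2) * n ^ (-(1:ℝ)/2 - 1)) with hg'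
  set g'' : ℝ → ℝ := fun n => k1 * (((1:ℝ)/2) * (((1:ℝ)/2 - 1) * n ^ ((1:ℝ)/2 - 1 - 1)))
      - k2 * ((-(1:ℝ)/2) * ((-(1:ℝ)/2 - 1) * n ^ (-(1:ℝ)/2 - 1 - 1))) with hg''
  have hD1 : ∀ n ∈ Ioi (0:ℝ), HasDerivAt g (g' n) n := by
    intro n hn
    have hn0 : (0:ℝ) < n := hn
    exact ((Real.hasDerivAt_rpow_const (Or.inl hn0.ne')).const_mul k1).sub
      ((Real.hasDerivAt_rpow_const (Or.inl hn0.ne')).const_mul k2)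
  have hD2 : ∀ n ∈ Ioi (0:ℝ), HasDerivAt g' (g'' n) n := by
    intro n hn
    have hn0 : (0:ℝ) < n := hn
    exact (((Real.hasDerivAt_rpow_const (Or.inl hn0.ne')).const_mul ((1:ℝ)/2)).const_mul k1).sub
      (((Real.hasDerivAt_rpow_const (Or.inl hn0.ne')).const_mul (-(1:ℝ)/2)).const_mul k2)
  have hgconc : ConcaveOn ℝ (Ioi (0:ℝ)) g := by
    refine concaveOn_of_hasDerivWithinAt2_nonpos (f' := g') (f'' := g'') (convex_Ioi 0)
      (fun n hn => ((hD1 n hn).continuousAt).continuousWithinAt) ?_ ?_ ?_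
    · rw [interior_Ioi]
      exact fun n hn => (hD1 n hn).hasDerivWithinAt
    · rw [interior_Ioi]
      exact fun n hn => (hD2 n hn).hasDerivWithinAt
    · rw [interior_Ioi]
      intro n hn
      have hn0 : (0:ℝ) < n := hn
      have p1 : (0:ℝ) < n ^ ((1:ℝ)/2 - 1 - 1) := Real.rpow_pos_of_pos hn0 _
      have p2 : (0:ℝ) < n ^ (-(1:ℝ)/2 - 1 - 1) := Real.rpow_pos_of_pos hn0 _
      simp only [hg'']
      nlinarith
  refine ⟨convex_Ioi 0, fun x hx y hy a b ha hb hab => ?_⟩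
  have hmem : a • x + b • y ∈ Ioi (0:ℝ) := (convex_Ioi 0) hx hy ha hb hab
  rw [heq _ hx, heq _ hy, heq _ hmem]
  exact hgconc.2 hx hy ha hb hab

theorem eps_convex (d V C : ℝ) (hd : 0 < d) (hV : 0 < V) (hC : 0 < C)
    (s : Set ℝ) (hconv : Convex ℝ s) (hs : s ⊆ Set.Ioi (0 : ℝ))
    (hw : ∀ n ∈ s, 0 ≤ wfun d V C n) :
    ConvexOn ℝ s (fun n => Qfun (wfun d V C n)) := by
  have hwc : ConcaveOn ℝ s (wfun d V C) :=
    (wfun_concaveOn d V C hd hV hC).subset hs hconv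
  refine ⟨hconv, fun x hx y hy a b ha hb hab => ?_⟩
  have h1 : a • wfun d V C x + b • wfun d V C y ≤ wfun d V C (a • x + b • y) :=
    hwc.2 hx hy ha hb hab
  have h2 : Qfun (wfun d V C (a • x + b • y)) ≤ Qfun (a • wfun d V C x + b • wfun d V C y) :=
    Qfun_antitone h1
  have h3 : Qfun (a • wfun d V C x + b • wfun d V C y)
      ≤ a • Qfun (wfun d V C x) + b • Qfun (wfun d V C y) :=
    Qfun_convexOn.2 (hw x hx) (hw y hy) ha hb hab
  exact h2.trans h3
end

section
/- Let f, g : D → ℝ with f ≥ 0 and g > 0. Then sup_{x ∈ D} f(x)·g(x) = sup_{x ∈ D, y ∈ ℝ} (2y√(f(x)) - y²/g(x)); in particular, a pair (x*, y*) maximizes the right-hand side if and only if x* maximizes f·g and y* = √(f(x*))·g(x*). -/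
lemma qt_key (a b y : ℝ) (hb : 0 < b) :
    2 * y * a - y ^ 2 / b = a ^ 2 * b - (a * b - y) ^ 2 / b := by
  field_simp; ring

lemma qt_le (a b y : ℝ) (hb : 0 < b) :
    2 * y * a - y ^ 2 / b ≤ a ^ 2 * b := by
  rw [qt_key a b y hb]
  have : 0 ≤ (a * b - y) ^ 2 / b := div_nonneg (sq_nonneg _) hb.le
  linarith

lemma qt_eq_iff (a b y : ℝ) (hb : 0 < b) :
    2 * y * a - y ^ 2 / b = a ^ 2 * b ↔ y = a * b := by
  rw [qt_key a b y hb]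
  constructor
  · intro h
    have h2 : (a * b - y) ^ 2 / b = 0 := by linarith
    have h3 : a * b - y = 0 := by
      field_simp at h2; exact (pow_eq_zero_iff two_ne_zero).mp (by rw [h2, mul_zero])
    linarith
  · intro h; rw [h]; simp

theorem quadratic_transform_sup {D : Type*} (f g : D → ℝ)
    (hf : ∀ x, 0 ≤ f x) (hg : ∀ x, 0 < g x) :
    (⨆ x : D, f x * g x) =
      (⨆ x : D, ⨆ y : ℝ, (2 * y * Real.sqrt (f x) - y ^ 2 / g x)) ∧
    ∀ (x' : D) (y' : ℝ),
      (∀ (x : D) (y : ℝ),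
          2 * y * Real.sqrt (f x) - y ^ 2 / g x ≤
            2 * y' * Real.sqrt (f x') - y' ^ 2 / g x') ↔
        ((∀ x : D, f x * g x ≤ f x' * g x') ∧ y' = Real.sqrt (f x') * g x') := by
  have hfg : ∀ x : D, f x * g x = Real.sqrt (f x) ^ 2 * g x := fun x => by
    rw [Real.sq_sqrt (hf x)]
  have hle : ∀ (x : D) (y : ℝ),
      2 * y * Real.sqrt (f x) - y ^ 2 / g x ≤ f x * g x := fun x y => by
    rw [hfg x]; exact qt_le _ _ _ (hg x)
  have hattain : ∀ x : D,
      2 * (Real.sqrt (f x) * g x) * Real.sqrt (f x)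
        - (Real.sqrt (f x) * g x) ^ 2 / g x = f x * g x := fun x => by
    rw [hfg x]; exact (qt_eq_iff _ _ _ (hg x)).mpr rfl
  have hsup : ∀ x : D,
      (⨆ y : ℝ, (2 * y * Real.sqrt (f x) - y ^ 2 / g x)) = f x * g x := by
    intro x
    apply le_antisymm
    · exact ciSup_le fun y => hle x y
    · rw [← hattain x]
      exact le_ciSup ⟨f x * g x, fun v ⟨y, hy⟩ => hy ▸ hle x y⟩ (Real.sqrt (f x) * g x)
  constructor
  · exact iSup_congr fun x => (hsup x).symm
  · intro x' y'
    constructor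
    · intro h
      have hval : 2 * y' * Real.sqrt (f x') - y' ^ 2 / g x' = f x' * g x' := by
        have h1 := hle x' y'
        have h2 := hattain x' ▸ h x' (Real.sqrt (f x') * g x')
        linarith
      refine ⟨fun x => ?_, ?_⟩
      · have := hattain x ▸ h x (Real.sqrt (f x) * g x)
        linarith [hval]
      · have := (qt_eq_iff (Real.sqrt (f x')) (g x') y' (hg x')).mp
          (by rw [hval, hfg x'])
        exact this
    · rintro ⟨hmax, rfl⟩
      intro x y
      calc 2 * y * Real.sqrt (f x) - y ^ 2 / g x ≤ f x * g x := hle x y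
        _ ≤ f x' * g x' := hmax x
        _ = _ := (hattain x').symm
end
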